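/- arXiv:2410.17403 — 6 statements merged into one kernel-verified Lean document; each statement's English description precedes it below -/
import Mathlib

section
/- Let G = (V, E) be a finite digraph with nonnegative edge costs c, let D = {(s_i, t_i)}_{i∈[k]} be k terminal pairs, and let E* ⊆ E be a feasible solution that contains a directed path P with the following property: for every i ∈ [k] there exists a directed s_i–t_i path P_i ⊆ E* with V(P) ∩ V(P_i) ≠ ∅. Then E* contains a junction tree whose density is at most (10·log₂|P| + 12)·c(E*)/k, where |P| denotes the number of edges of P. (Consequently, since P may be assumed to have at most 2k edges after suppressing degree-two vertices, E* contains a junction tree of density O(log k)·c(E*)/k.) -/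
/-!
**Statement 0.** Let `G = (V, E)` be a finite digraph with nonnegative edge costs `c`,
let `D = {(sᵢ, tᵢ)}_{i ∈ [k]}` be `k` terminal pairs, and let `E* ⊆ E` be a feasible
solution containing a directed path `P` such that every pair has a directed `sᵢ–tᵢ`
path `Pᵢ ⊆ E*` with `V(P) ∩ V(Pᵢ) ≠ ∅`.  Then `E*` contains a junction tree whose
density is at most `(10·log₂|P| + 12)·c(E*)/k`, where `|P|` is the number of edges
of `P`.
-/


open scoped Classical

namespace JTAux

variable {α : Type*} {r : α → α → Prop}

lemma reach_head : ∀ (l : List α) (x : α), (x :: l).Chain' r → ∀ a ∈ x :: l,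
    Relation.ReflTransGen r x a := by
  intro l
  induction l with
  | nil =>
    intro x _ a ha
    rcases List.mem_singleton.mp ha with rfl
    exact Relation.ReflTransGen.refl
  | cons y ys ih =>
    intro x hch a ha
    have h1 : r x y := (List.isChain_cons_cons.mp hch).1
    have h2 := (List.isChain_cons_cons.mp hch).2
    rcases List.mem_cons.mp ha with rfl | ha'
    · exact Relation.ReflTransGen.refl
    · exact Relation.ReflTransGen.trans (Relation.ReflTransGen.single h1) (ih y h2 a ha')

lemma reach_last : ∀ (l : List α) (x : α), (x :: l).Chain' r → ∀ a ∈ x :: l,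
    Relation.ReflTransGen r a ((x :: l).getLast (List.cons_ne_nil x l)) := by
  intro l
  induction l with
  | nil =>
    intro x _ a ha
    rcases List.mem_singleton.mp ha with rfl
    simp only [List.getLast_singleton]
    exact Relation.ReflTransGen.refl
  | cons y ys ih =>
    intro x hch a ha
    have h1 : r x y := (List.isChain_cons_cons.mp hch).1
    have h2 := (List.isChain_cons_cons.mp hch).2
    have hGL : ((x :: y :: ys).getLast (List.cons_ne_nil x (y :: ys)))
        = ((y :: ys).getLast (List.cons_ne_nil y ys)) := by
      simp [List.getLast_cons]
    rw [hGL]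
    rcases List.mem_cons.mp ha with rfl | ha'
    · exact Relation.ReflTransGen.trans (Relation.ReflTransGen.single h1)
        (ih y h2 y (List.mem_cons_self (a := y) (l := ys)))
    · exact ih y h2 a ha'

end JTAux

namespace JT

variable {V : Type*}

/-- one-step relation: edges of `Estar`. -/
def Step (Estar : Finset (V × V)) : V → V → Prop := fun a b => (a, b) ∈ Estar

/-- reachability inside `Estar`. -/
def Reach (Estar : Finset (V × V)) : V → V → Prop :=
  Relation.ReflTransGen (Step Estar)

variable (Estar : Finset (V × V)) (p : ℕ → V) (n : ℕ)

/-- earliest position on the path reachable from `v` (or `n` if none). -/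
noncomputable def rho (v : V) : ℕ :=
  if h : ((Finset.range n).filter (fun j => Reach Estar v (p j))).Nonempty
  then ((Finset.range n).filter (fun j => Reach Estar v (p j))).min' h else n

/-- one plus the latest position on the path that reaches `v` (or `0` if none). -/
noncomputable def lam (v : V) : ℕ :=
  if h : ((Finset.range n).filter (fun j => Reach Estar (p j) v)).Nonempty
  then ((Finset.range n).filter (fun j => Reach Estar (p j) v)).max' h + 1 else 0

variable {Estar p n}

lemma rho_le {v : V} {j : ℕ} (hj : j < n) (hr : Reach Estar v (p j)) :
    rho Estar p n v ≤ j := by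
  have hmem : j ∈ (Finset.range n).filter (fun j => Reach Estar v (p j)) := by
    simp [Finset.mem_filter, Finset.mem_range, hj, hr]
  rw [rho, dif_pos ⟨j, hmem⟩]
  exact Finset.min'_le _ _ hmem

lemma rho_le_n (v : V) : rho Estar p n v ≤ n := by
  rw [rho]
  split
  · rename_i h
    have := Finset.min'_mem _ h
    simp only [Finset.mem_filter, Finset.mem_range] at this
    omega
  · exact le_refl n

lemma rho_spec {v : V} {j : ℕ} (hj : j < n) (hr : Reach Estar v (p j)) :
    rho Estar p n v < n ∧ Reach Estar v (p (rho Estar p n v)) := by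
  have hmem : j ∈ (Finset.range n).filter (fun j => Reach Estar v (p j)) := by
    simp [Finset.mem_filter, Finset.mem_range, hj, hr]
  rw [rho, dif_pos ⟨j, hmem⟩]
  have := Finset.min'_mem ((Finset.range n).filter (fun j => Reach Estar v (p j))) ⟨j, hmem⟩
  simp only [Finset.mem_filter, Finset.mem_range] at this
  exact this

lemma rho_mono {a b : V} (h : Reach Estar a b) :
    rho Estar p n a ≤ rho Estar p n b := by
  by_cases hb : ∃ j, j < n ∧ Reach Estar b (p j)
  · obtain ⟨j, hj, hr⟩ := hb
    obtain ⟨h1, h2⟩ := rho_spec hj hr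
    exact rho_le h1 (h.trans h2)
  · have : rho Estar p n b = n := by
      rw [rho, dif_neg]
      rintro ⟨j, hj⟩
      simp only [Finset.mem_filter, Finset.mem_range] at hj
      exact hb ⟨j, hj⟩
    rw [this]; exact rho_le_n a

lemma lam_ge {v : V} {j : ℕ} (hj : j < n) (hr : Reach Estar (p j) v) :
    j + 1 ≤ lam Estar p n v := by
  have hmem : j ∈ (Finset.range n).filter (fun j => Reach Estar (p j) v) := by
    simp [Finset.mem_filter, Finset.mem_range, hj, hr]
  rw [lam, dif_pos ⟨j, hmem⟩]
  have := Finset.le_max' _ _ hmem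
  omega

lemma lam_le_n (v : V) : lam Estar p n v ≤ n := by
  rw [lam]
  split
  · rename_i h
    have := Finset.max'_mem _ h
    simp only [Finset.mem_filter, Finset.mem_range] at this
    omega
  · omega

lemma lam_spec {v : V} {j : ℕ} (hj : j < n) (hr : Reach Estar (p j) v) :
    1 ≤ lam Estar p n v ∧ lam Estar p n v - 1 < n ∧
      Reach Estar (p (lam Estar p n v - 1)) v := by
  have hmem : j ∈ (Finset.range n).filter (fun j => Reach Estar (p j) v) := by
    simp [Finset.mem_filter, Finset.mem_range, hj, hr]
  rw [lam, dif_pos ⟨j, hmem⟩]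
  have hmm := Finset.max'_mem ((Finset.range n).filter (fun j => Reach Estar (p j) v)) ⟨j, hmem⟩
  simp only [Finset.mem_filter, Finset.mem_range] at hmm
  refine ⟨by omega, by omega, ?_⟩
  simpa using hmm.2

lemma lam_mono {a b : V} (h : Reach Estar a b) :
    lam Estar p n a ≤ lam Estar p n b := by
  by_cases ha : ∃ j, j < n ∧ Reach Estar (p j) a
  · obtain ⟨j, hj, hr⟩ := ha
    obtain ⟨h1, h2, h3⟩ := lam_spec hj hr
    have := lam_ge h2 (h3.trans h)
    omega
  · have : lam Estar p n a = 0 := by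
      rw [lam, dif_neg]
      rintro ⟨j, hj⟩
      simp only [Finset.mem_filter, Finset.mem_range] at hj
      exact ha ⟨j, hj⟩
    omega

variable (Estar p n)

/-- the candidate junction edge set for a candidate `q = (level, gridpoint)`. -/
noncomputable def HJ (q : ℕ × ℕ) : Finset (V × V) :=
  Estar.filter (fun e =>
    (rho Estar p n e.2 ≤ q.2 ∧ q.2 < rho Estar p n e.1 + 2 ^ q.1) ∨
    (q.2 + 1 ≤ lam Estar p n e.1 ∧ lam Estar p n e.2 + 1 ≤ q.2 + 2 ^ (q.1 + 1)))

variable {Estar p n}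

lemma reach_in {q : ℕ × ℕ} {sv : V} (hg : q.2 < n)
    (h1 : rho Estar p n sv ≤ q.2) (h2 : q.2 < rho Estar p n sv + 2 ^ q.1)
    (hre : Reach Estar sv (p q.2)) :
    Relation.ReflTransGen (fun a b => (a, b) ∈ HJ Estar p n q) sv (p q.2) := by
  have key : ∀ x : V, Reach Estar x (p q.2) → Reach Estar sv x →
      Relation.ReflTransGen (fun a b => (a, b) ∈ HJ Estar p n q) x (p q.2) := by
    intro x hxg
    induction hxg using Relation.ReflTransGen.head_induction_on with
    | refl => intro _; exact Relation.ReflTransGen.refl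
    | @head a b hab hbg ih =>
      intro hsa
      have hmem : (a, b) ∈ HJ Estar p n q := by
        rw [HJ, Finset.mem_filter]
        dsimp only
        refine ⟨hab, Or.inl ⟨?_, ?_⟩⟩
        · calc rho Estar p n b ≤ rho Estar p n (p q.2) := rho_mono hbg
            _ ≤ q.2 := rho_le hg Relation.ReflTransGen.refl
        · have := rho_mono (p := p) (n := n) hsa
          omega
      exact Relation.ReflTransGen.head hmem
        (ih (hsa.tail hab))
  exact key sv hre Relation.ReflTransGen.refl

lemma reach_out {q : ℕ × ℕ} {tv : V} (hg : q.2 < n)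
    (h2 : lam Estar p n tv + 1 ≤ q.2 + 2 ^ (q.1 + 1))
    (hre : Reach Estar (p q.2) tv) :
    Relation.ReflTransGen (fun a b => (a, b) ∈ HJ Estar p n q) (p q.2) tv := by
  have key : ∀ x : V, Reach Estar x tv → Reach Estar (p q.2) x →
      Relation.ReflTransGen (fun a b => (a, b) ∈ HJ Estar p n q) x tv := by
    intro x hxt
    induction hxt using Relation.ReflTransGen.head_induction_on with
    | refl => intro _; exact Relation.ReflTransGen.refl
    | @head a b hab hbt ih =>
      intro hga
      have hmem : (a, b) ∈ HJ Estar p n q := by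
        rw [HJ, Finset.mem_filter]
        dsimp only
        refine ⟨hab, Or.inr ⟨?_, ?_⟩⟩
        · have h3 : q.2 + 1 ≤ lam Estar p n (p q.2) :=
            lam_ge hg Relation.ReflTransGen.refl
          have h4 := lam_mono (p := p) (n := n) hga
          omega
        · have h5 : Reach Estar b tv := hbt
          have := lam_mono (p := p) (n := n) h5
          omega
      exact Relation.ReflTransGen.head hmem
        (ih (hga.tail hab))
  exact key (p q.2) hre Relation.ReflTransGen.refl


lemma sep_of_dvd {D x y : ℕ} (hD : 0 < D) (hx : D ∣ x) (hy : D ∣ y) (hxy : x ≠ y) :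
    x + D ≤ y ∨ y + D ≤ x := by
  rcases le_or_gt x y with h | h
  · left
    have hd : D ∣ y - x := Nat.dvd_sub hy hx
    have := Nat.le_of_dvd (by omega) hd
    omega
  · right
    have hd : D ∣ x - y := Nat.dvd_sub hx hy
    have := Nat.le_of_dvd (by omega) hd
    omega

lemma count_bound {e : V × V} (he : e ∈ Estar) {L : ℕ} (Tc : Finset (ℕ × ℕ))
    (hTc : ∀ q ∈ Tc, q.1 ≤ L ∧ 2 ^ q.1 ∣ q.2) :
    (Tc.filter (fun q => e ∈ HJ Estar p n q)).card ≤ 3 * (L + 1) := by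
  have hstep : Step Estar e.1 e.2 := he
  have hmono1 : rho Estar p n e.1 ≤ rho Estar p n e.2 :=
    rho_mono (Relation.ReflTransGen.single hstep)
  have hmono2 : lam Estar p n e.1 ≤ lam Estar p n e.2 :=
    lam_mono (Relation.ReflTransGen.single hstep)
  set F := Tc.filter (fun q => e ∈ HJ Estar p n q) with hF
  have hsub : F ⊆ (Finset.range (L + 1)).biUnion
      (fun ℓ => F.filter (fun q => q.1 = ℓ)) := by
    intro q hq
    rw [Finset.mem_biUnion]
    refine ⟨q.1, ?_, Finset.mem_filter.mpr ⟨hq, rfl⟩⟩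
    have := (hTc q (Finset.mem_filter.mp hq).1).1
    rw [Finset.mem_range]; omega
  have hper : ∀ ℓ, (F.filter (fun q => q.1 = ℓ)).card ≤ 3 := by
    intro ℓ
    have hDpos : 0 < 2 ^ ℓ := pow_pos (by norm_num) ℓ
    set F1 := (F.filter (fun q => q.1 = ℓ)).filter
        (fun q => rho Estar p n e.2 ≤ q.2 ∧ q.2 < rho Estar p n e.1 + 2 ^ ℓ) with hF1
    set F2 := (F.filter (fun q => q.1 = ℓ)).filter
        (fun q => q.2 + 1 ≤ lam Estar p n e.1 ∧
          lam Estar p n e.2 + 1 ≤ q.2 + 2 ^ (ℓ + 1)) with hF2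
    have hunion : F.filter (fun q => q.1 = ℓ) ⊆ F1 ∪ F2 := by
      intro q hq
      have hq' := Finset.mem_filter.mp hq
      have hql : q.1 = ℓ := hq'.2
      have hqF := Finset.mem_filter.mp hq'.1
      have hmem := hqF.2
      rw [HJ, Finset.mem_filter] at hmem
      rcases hmem.2 with h | h
      · exact Finset.mem_union_left _ (Finset.mem_filter.mpr ⟨hq, by rw [← hql]; exact h⟩)
      · exact Finset.mem_union_right _ (Finset.mem_filter.mpr ⟨hq, by rw [← hql]; exact h⟩)
    have hdvd : ∀ q ∈ F.filter (fun q => q.1 = ℓ), 2 ^ ℓ ∣ q.2 := by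
      intro q hq
      have hq' := Finset.mem_filter.mp hq
      have h := (hTc q (Finset.mem_filter.mp hq'.1).1).2
      rw [hq'.2] at h
      exact h
    have hc1 : F1.card ≤ 1 := by
      rw [Finset.card_le_one]
      intro a ha b hb
      have ha1 := Finset.mem_filter.mp ha
      have hb1 := Finset.mem_filter.mp hb
      have hda := hdvd a ha1.1
      have hdb := hdvd b hb1.1
      have hca := ha1.2
      have hcb := hb1.2
      have hla : a.1 = ℓ := (Finset.mem_filter.mp ha1.1).2
      have hlb : b.1 = ℓ := (Finset.mem_filter.mp hb1.1).2
      have h2 : a.2 = b.2 := by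
        by_contra hne
        rcases sep_of_dvd hDpos hda hdb hne with h | h <;> omega
      exact Prod.ext (hla.trans hlb.symm) h2
    have hc2 : F2.card ≤ 2 := by
      by_contra hgt
      push_neg at hgt
      obtain ⟨a, b, d, ha, hb, hd, hab, had, hbd⟩ := Finset.two_lt_card_iff.mp hgt
      have ha1 := Finset.mem_filter.mp ha
      have hb1 := Finset.mem_filter.mp hb
      have hd1 := Finset.mem_filter.mp hd
      have hda := hdvd a ha1.1
      have hdb := hdvd b hb1.1
      have hdd := hdvd d hd1.1
      have hca := ha1.2
      have hcb := hb1.2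
      have hcd := hd1.2
      have hla : a.1 = ℓ := (Finset.mem_filter.mp ha1.1).2
      have hlb : b.1 = ℓ := (Finset.mem_filter.mp hb1.1).2
      have hld : d.1 = ℓ := (Finset.mem_filter.mp hd1.1).2
      have hne1 : a.2 ≠ b.2 := fun h => hab (Prod.ext (hla.trans hlb.symm) h)
      have hne2 : a.2 ≠ d.2 := fun h => had (Prod.ext (hla.trans hld.symm) h)
      have hne3 : b.2 ≠ d.2 := fun h => hbd (Prod.ext (hlb.trans hld.symm) h)
      have hpow : 2 ^ (ℓ + 1) = 2 ^ ℓ + 2 ^ ℓ := by ring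
      rcases sep_of_dvd hDpos hda hdb hne1 with h1 | h1 <;>
        rcases sep_of_dvd hDpos hda hdd hne2 with h2 | h2 <;>
          rcases sep_of_dvd hDpos hdb hdd hne3 with h3 | h3 <;> omega
    calc (F.filter (fun q => q.1 = ℓ)).card ≤ (F1 ∪ F2).card := Finset.card_le_card hunion
      _ ≤ F1.card + F2.card := Finset.card_union_le _ _
      _ ≤ 3 := by omega
  calc F.card ≤ ((Finset.range (L + 1)).biUnion
        (fun ℓ => F.filter (fun q => q.1 = ℓ))).card := Finset.card_le_card hsub
    _ ≤ ∑ ℓ ∈ Finset.range (L + 1), (F.filter (fun q => q.1 = ℓ)).card :=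
        Finset.card_biUnion_le
    _ ≤ ∑ _ℓ ∈ Finset.range (L + 1), 3 := Finset.sum_le_sum (fun ℓ _ => hper ℓ)
    _ = 3 * (L + 1) := by simp [Finset.sum_const, Finset.card_range]; ring

lemma numeric {n : ℕ} (hn : 1 ≤ n) :
    (3 * (Nat.log 2 n + 1) : ℝ) ≤ 10 * Real.logb 2 ((n : ℝ) - 1) + 12 := by
  rcases eq_or_lt_of_le hn with h1 | h2
  · rw [← h1]
    norm_num [Nat.log_one_right, Real.logb_zero]
  · have hL : (2 : ℝ) ^ (Nat.log 2 n) ≤ (n : ℝ) := by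
      exact_mod_cast Nat.pow_log_le_self 2 (by omega)
    have hn2 : (2 : ℝ) ≤ (n : ℝ) := by exact_mod_cast h2
    have hx : (0 : ℝ) < 2 * ((n : ℝ) - 1) := by linarith
    have hlog : (Nat.log 2 n : ℝ) ≤ Real.logb 2 (2 * ((n : ℝ) - 1)) := by
      rw [Real.le_logb_iff_rpow_le (by norm_num) hx]
      calc (2 : ℝ) ^ ((Nat.log 2 n : ℕ) : ℝ) = (2 : ℝ) ^ (Nat.log 2 n : ℕ) :=
            Real.rpow_natCast 2 _
        _ ≤ (n : ℝ) := hL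
        _ ≤ 2 * ((n : ℝ) - 1) := by linarith
    have hsplit : Real.logb 2 (2 * ((n : ℝ) - 1)) = 1 + Real.logb 2 ((n : ℝ) - 1) := by
      rw [Real.logb_mul (by norm_num) (by linarith), Real.logb_self_eq_one (by norm_num)]
    have hpos : (0 : ℝ) ≤ Real.logb 2 ((n : ℝ) - 1) :=
      Real.logb_nonneg (by norm_num) (by linarith)
    rw [hsplit] at hlog
    linarith

end JT


theorem stmt_0 {V : Type*} [Fintype V] [DecidableEq V]
    (E Estar : Finset (V × V)) (hEsub : Estar ⊆ E)
    (c : V × V → ℝ) (hc : ∀ e, 0 ≤ c e)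
    (k : ℕ) (hk : 0 < k) (s t : Fin k → V)
    -- the directed path `P`, given as its list of vertices, contained in `E*`
    (P : List V) (hPne : P ≠ [])
    (hPchain : P.Chain' (fun a b => (a, b) ∈ Estar))
    -- feasibility together with the "one path" property: each pair has an
    -- `sᵢ`–`tᵢ` dipath in `E*` intersecting `P` in at least one vertex
    (hfeas : ∀ i : Fin k, ∃ Pi : List V, Pi ≠ [] ∧
      Pi.Chain' (fun a b => (a, b) ∈ Estar) ∧
      Pi.head? = some (s i) ∧ Pi.getLast? = some (t i) ∧
      ∃ v, v ∈ P ∧ v ∈ Pi) :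
    -- conclusion: a junction tree `H ⊆ E*` with root `r` covering a nonempty set
    -- `DH` of terminal pairs, of density at most `(10 log₂|P| + 12) c(E*) / k`
    ∃ (H : Finset (V × V)) (r : V) (DH : Finset (Fin k)),
      H ⊆ Estar ∧ DH.Nonempty ∧
      (∀ i ∈ DH,
        Relation.ReflTransGen (fun a b => (a, b) ∈ H) (s i) r ∧
        Relation.ReflTransGen (fun a b => (a, b) ∈ H) r (t i)) ∧
      (∑ e ∈ H, c e) / (DH.card : ℝ) ≤
        (10 * Real.logb 2 ((P.length : ℝ) - 1) + 12) *
          (∑ e ∈ Estar, c e) / (k : ℝ) := by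
  classical
  have hn1 : 0 < P.length := List.length_pos_iff.mpr hPne
  set n := P.length with hn
  set p : ℕ → V := fun j => P.getD j (P.getLast hPne) with hp
  set R := JT.Reach Estar with hR
  -- edges and reachability along P
  have hPedge : ∀ j, j + 1 < n → JT.Step Estar (p j) (p (j + 1)) := by
    intro j hj
    have h := List.isChain_iff_getElem.mp hPchain j (by omega)
    have e1 : p j = P.get ⟨j, by omega⟩ := by
      simp [hp, List.getD_eq_getElem?_getD, List.getElem?_eq_getElem (by omega : j < P.length)]
    have e2 : p (j + 1) = P.get ⟨j + 1, by omega⟩ := by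
      simp [hp, List.getD_eq_getElem?_getD, List.getElem?_eq_getElem (by omega : j + 1 < P.length)]
    rw [JT.Step, e1, e2]
    exact h
  have hPreach : ∀ {j j' : ℕ}, j ≤ j' → j' < n → R (p j) (p j') := by
    intro j j' hle
    induction hle with
    | refl => intro _; exact Relation.ReflTransGen.refl
    | @step m hm ih =>
      intro hlt
      exact Relation.ReflTransGen.tail (ih (by omega)) (hPedge m (by omega))
  -- crossing vertices
  have hcross : ∀ i : Fin k, ∃ jv, jv < n ∧ R (s i) (p jv) ∧ R (p jv) (t i) := by
    intro i
    obtain ⟨Pi, hne, hch, hh, hl, v, hvP, hvPi⟩ := hfeas i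
    obtain ⟨x, tl, rfl⟩ : ∃ x tl, Pi = x :: tl := by
      cases Pi with
      | nil => exact absurd rfl hne
      | cons a l => exact ⟨a, l, rfl⟩
    have hx : x = s i := by simpa using hh
    have hlast : (x :: tl).getLast (List.cons_ne_nil x tl) = t i := by
      have h2 := List.getLast?_eq_getLast (List.cons_ne_nil x tl)
      rw [h2] at hl
      exact Option.some.inj hl
    obtain ⟨⟨jv, hjv⟩, hget⟩ := List.mem_iff_get.mp hvP
    have hpv : p jv = v := by
      simp only [hp, List.getD_eq_getElem?_getD, List.getElem?_eq_getElem hjv,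
        Option.getD_some]
      rw [← hget]
      simp [List.get_eq_getElem]
    refine ⟨jv, hjv, ?_, ?_⟩
    · rw [hpv, ← hx]
      exact JTAux.reach_head tl x hch v hvPi
    · have hr := JTAux.reach_last tl x hch v hvPi
      rw [hlast] at hr
      rw [hpv]
      exact hr
  -- interval data per pair
  set rho := JT.rho Estar p n with hrho
  set lam := JT.lam Estar p n with hlam
  set lev : Fin k → ℕ := fun i => Nat.log 2 (lam (t i) - rho (s i)) with hlev
  set gp : Fin k → ℕ := fun i =>
    2 ^ lev i * ((rho (s i) + 2 ^ lev i - 1) / 2 ^ lev i) with hgp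
  set phi : Fin k → ℕ × ℕ := fun i => (lev i, gp i) with hphi
  have hfacts : ∀ i : Fin k, rho (s i) < lam (t i) ∧ lam (t i) ≤ n ∧
      2 ^ lev i ≤ lam (t i) - rho (s i) ∧ lam (t i) - rho (s i) < 2 ^ (lev i + 1) ∧
      rho (s i) ≤ gp i ∧ gp i + 1 ≤ rho (s i) + 2 ^ lev i ∧ gp i < lam (t i) ∧
      R (s i) (p (rho (s i))) ∧ R (p (lam (t i) - 1)) (t i) ∧ lev i ≤ Nat.log 2 n := by
    intro i
    obtain ⟨jv, hjv, h1, h2⟩ := hcross i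
    have hsp := JT.rho_spec (Estar := Estar) (p := p) (n := n) hjv h1
    have hls := JT.lam_spec (Estar := Estar) (p := p) (n := n) hjv h2
    have hrle : rho (s i) ≤ jv := JT.rho_le hjv h1
    have hlge : jv + 1 ≤ lam (t i) := JT.lam_ge hjv h2
    have hlen : lam (t i) ≤ n := JT.lam_le_n _
    have hLR : rho (s i) < lam (t i) := by omega
    have hple : 2 ^ lev i ≤ lam (t i) - rho (s i) := by
      rw [hlev]
      exact Nat.pow_log_le_self 2 (by omega)
    have hplt : lam (t i) - rho (s i) < 2 ^ (lev i + 1) := by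
      rw [hlev]
      exact Nat.lt_pow_succ_log_self (by norm_num) _
    have hppos : 0 < 2 ^ lev i := pow_pos (by norm_num) _
    have hq := Nat.div_add_mod (rho (s i) + 2 ^ lev i - 1) (2 ^ lev i)
    have hmlt : (rho (s i) + 2 ^ lev i - 1) % 2 ^ lev i < 2 ^ lev i :=
      Nat.mod_lt _ hppos
    have hb : rho (s i) ≤ gp i ∧ gp i + 1 ≤ rho (s i) + 2 ^ lev i := by
      rw [hgp]
      dsimp only
      generalize hX : 2 ^ lev i * ((rho (s i) + 2 ^ lev i - 1) / 2 ^ lev i) = X at hq ⊢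
      omega
    have hlevle : lev i ≤ Nat.log 2 n := by
      rw [hlev]
      exact Nat.log_mono_right (by omega)
    exact ⟨hLR, hlen, hple, hplt, hb.1, hb.2, by omega, hsp.2, hls.2.2, hlevle⟩
  -- candidates
  set Tc : Finset (ℕ × ℕ) := Finset.image phi Finset.univ with hTcdef
  have hTcprop : ∀ q ∈ Tc, q.1 ≤ Nat.log 2 n ∧ 2 ^ q.1 ∣ q.2 := by
    intro q hq
    rw [hTcdef, Finset.mem_image] at hq
    obtain ⟨i, _, rfl⟩ := hq
    exact ⟨(hfacts i).2.2.2.2.2.2.2.2.2, ⟨_, rfl⟩⟩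
  set DHf : ℕ × ℕ → Finset (Fin k) := fun q => Finset.univ.filter (fun i => phi i = q)
    with hDHf
  have hpartition : ∑ q ∈ Tc, (DHf q).card = k := by
    have h := Finset.card_eq_sum_card_image phi (Finset.univ : Finset (Fin k))
    simp only [Finset.card_univ, Fintype.card_fin] at h
    rw [hTcdef, hDHf]
    exact h.symm
  set C : ℝ := ∑ e ∈ Estar, c e with hC
  have hC0 : 0 ≤ C := Finset.sum_nonneg (fun e _ => hc e)
  set A : ℕ := 3 * (Nat.log 2 n + 1) with hA
  -- total cost of all candidate junction sets
  have hsum2 : ∑ q ∈ Tc, (∑ e ∈ JT.HJ Estar p n q, c e) ≤ (A : ℝ) * C := by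
    have step1 : ∀ q : ℕ × ℕ, (∑ e ∈ JT.HJ Estar p n q, c e)
        = ∑ e ∈ Estar, (if e ∈ JT.HJ Estar p n q then c e else 0) := by
      intro q
      rw [Finset.sum_ite_mem]
      congr 1
      exact (Finset.inter_eq_right.mpr (Finset.filter_subset _ _)).symm
    calc ∑ q ∈ Tc, (∑ e ∈ JT.HJ Estar p n q, c e)
        = ∑ q ∈ Tc, ∑ e ∈ Estar, (if e ∈ JT.HJ Estar p n q then c e else 0) := by
          exact Finset.sum_congr rfl (fun q _ => step1 q)
      _ = ∑ e ∈ Estar, ∑ q ∈ Tc, (if e ∈ JT.HJ Estar p n q then c e else 0) :=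
          Finset.sum_comm
      _ ≤ ∑ e ∈ Estar, (A : ℝ) * c e := by
          apply Finset.sum_le_sum
          intro e he
          have hcnt := JT.count_bound (p := p) (n := n) he Tc hTcprop
          calc ∑ q ∈ Tc, (if e ∈ JT.HJ Estar p n q then c e else 0)
              = ∑ q ∈ Tc.filter (fun q => e ∈ JT.HJ Estar p n q), c e := by
                rw [Finset.sum_filter]
            _ = ((Tc.filter (fun q => e ∈ JT.HJ Estar p n q)).card : ℝ) * c e := by
                rw [Finset.sum_const, nsmul_eq_mul]
            _ ≤ (A : ℝ) * c e := by
                apply mul_le_mul_of_nonneg_right _ (hc e)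
                rw [hA]
                have hcnt' : (Tc.filter (fun q => e ∈ JT.HJ Estar p n q)).card
                    ≤ 3 * (Nat.log 2 n + 1) := by
                  convert hcnt using 2
                  congr!
                exact_mod_cast hcnt'
      _ = (A : ℝ) * C := by rw [hC, Finset.mul_sum]
  -- select a good candidate
  have hTcne : Tc.Nonempty := ⟨phi ⟨0, hk⟩, by
    rw [hTcdef]; exact Finset.mem_image_of_mem _ (Finset.mem_univ _)⟩
  have hpartR : ∑ q ∈ Tc, ((DHf q).card : ℝ) = (k : ℝ) := by
    exact_mod_cast congrArg (Nat.cast : ℕ → ℝ) hpartition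
  have hsel : ∃ q ∈ Tc, (k : ℝ) * (∑ e ∈ JT.HJ Estar p n q, c e)
      ≤ ((A : ℝ) * C) * ((DHf q).card : ℝ) := by
    apply Finset.exists_le_of_sum_le hTcne
    calc ∑ q ∈ Tc, (k : ℝ) * (∑ e ∈ JT.HJ Estar p n q, c e)
        = (k : ℝ) * ∑ q ∈ Tc, (∑ e ∈ JT.HJ Estar p n q, c e) := by
          rw [Finset.mul_sum]
      _ ≤ (k : ℝ) * ((A : ℝ) * C) := by
          apply mul_le_mul_of_nonneg_left hsum2 (by positivity)
      _ = ((A : ℝ) * C) * (k : ℝ) := by ring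
      _ = ∑ q ∈ Tc, ((A : ℝ) * C) * ((DHf q).card : ℝ) := by
          rw [← Finset.mul_sum, hpartR]
  obtain ⟨q, hqTc, hqsel⟩ := hsel
  obtain ⟨i0, hi0⟩ : ∃ i : Fin k, phi i = q := by
    rw [hTcdef, Finset.mem_image] at hqTc
    obtain ⟨i, _, h⟩ := hqTc
    exact ⟨i, h⟩
  have hi0mem : i0 ∈ DHf q := by
    rw [hDHf, Finset.mem_filter]
    exact ⟨Finset.mem_univ _, hi0⟩
  refine ⟨JT.HJ Estar p n q, p q.2, DHf q, Finset.filter_subset _ _, ⟨i0, hi0mem⟩, ?_, ?_⟩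
  · -- serving
    intro i hi
    rw [hDHf, Finset.mem_filter] at hi
    have hphiq : phi i = q := hi.2
    obtain ⟨hLR, hlen, hple, hplt, hgL, hgU, hgR, hreachS, hreachT, _⟩ := hfacts i
    have hq1 : q.1 = lev i := by rw [← hphiq]
    have hq2 : q.2 = gp i := by rw [← hphiq]
    have hgn : q.2 < n := by omega
    constructor
    · apply JT.reach_in hgn
      · rw [← hrho]; omega
      · rw [← hrho, hq1, hq2]; omega
      · refine Relation.ReflTransGen.trans hreachS (hPreach (by omega) hgn)
    · apply JT.reach_out hgn
      · rw [← hlam, hq1, hq2]; omega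
      · refine Relation.ReflTransGen.trans (hPreach (by omega : q.2 ≤ lam (t i) - 1)
          (by omega)) hreachT
  · -- density bound
    have hcardpos : 0 < (DHf q).card := Finset.card_pos.mpr ⟨i0, hi0mem⟩
    have hDpos : (0 : ℝ) < ((DHf q).card : ℝ) := by exact_mod_cast hcardpos
    have hkpos : (0 : ℝ) < (k : ℝ) := by exact_mod_cast hk
    have hAB : (A : ℝ) ≤ 10 * Real.logb 2 ((n : ℝ) - 1) + 12 := by
      have := JT.numeric (n := n) (by omega)
      rw [hA]
      push_cast
      push_cast at this
      linarith
    rw [div_le_div_iff₀ hDpos hkpos]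
    have h1 : (∑ e ∈ JT.HJ Estar p n q, c e) * (k : ℝ)
        = (k : ℝ) * (∑ e ∈ JT.HJ Estar p n q, c e) := by ring
    rw [h1]
    calc (k : ℝ) * (∑ e ∈ JT.HJ Estar p n q, c e)
        ≤ ((A : ℝ) * C) * ((DHf q).card : ℝ) := hqsel
      _ ≤ ((10 * Real.logb 2 ((n : ℝ) - 1) + 12) * C) * ((DHf q).card : ℝ) := by
          apply mul_le_mul_of_nonneg_right _ (le_of_lt hDpos)
          exact mul_le_mul_of_nonneg_right hAB hC0
      _ = (10 * Real.logb 2 ((n : ℝ) - 1) + 12) * C * ((DHf q).card : ℝ) := by ring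
end

section
/- In the reachability layering of a digraph, every edge joins vertices in the same layer or in consecutive layers: if (u, v) ∈ E* with u ∈ L_a and v ∈ L_b, then |a − b| ≤ 1. More precisely, if a ≠ b then {a, b} = {j, j+1} for some j, i.e., u and v lie in adjacent layers L_j and L_{j+1}. -/
/-!
**Statement 1.** In the reachability layering of a digraph, every edge joins
vertices in the same layer or in consecutive layers: if `(u, v) ∈ E*` with
`u ∈ L_a` and `v ∈ L_b`, then `|a − b| ≤ 1`; i.e. `a = b`, or `{a, b} = {j, j+1}`
for some `j`.
-/

/-- Reachability via directed paths using the edges of `E`. -/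
def Reach {V : Type*} (E : Set (V × V)) (u w : V) : Prop :=
  Relation.ReflTransGen (fun a b => (a, b) ∈ E) u w

/-- The reachability layering of the digraph with edge set `E`, started at `v0`:
`L₀` is the set of vertices reachable from `v0`; for odd `j ≥ 1`, `L_j` is the set
of yet-unlayered vertices that can reach `L_{j-1}`; for even `j ≥ 2`, `L_j` is the
set of yet-unlayered vertices reachable from `L_{j-1}`. -/
def layer {V : Type*} (E : Set (V × V)) (v0 : V) : ℕ → Set V
  | 0 => {v | Reach E v0 v}
  | (j + 1) =>
      {v | (∀ j' ≤ j, v ∉ layer E v0 j') ∧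
        (if Odd (j + 1) then
          ∃ w ∈ layer E v0 j, Reach E v w
        else
          ∃ w ∈ layer E v0 j, Reach E w v)}

lemma mem_layer_succ {V : Type*} (E : Set (V × V)) (v0 : V) (x : V) (j : ℕ) :
    x ∈ layer E v0 (j + 1) ↔
      (∀ j' ≤ j, x ∉ layer E v0 j') ∧
        (if Odd (j + 1) then ∃ w ∈ layer E v0 j, Reach E x w
         else ∃ w ∈ layer E v0 j, Reach E w x) := by
  simp only [layer, Set.mem_setOf_eq]

lemma mem_layer_zero {V : Type*} (E : Set (V × V)) (v0 : V) (x : V) :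
    x ∈ layer E v0 0 ↔ Reach E v0 x := by
  simp only [layer, Set.mem_setOf_eq]

lemma layer_zero_eq {V : Type*} (E : Set (V × V)) (v0 : V) {x : V} {c : ℕ}
    (hx : x ∈ layer E v0 c) (hr : Reach E v0 x) : c = 0 := by
  by_contra h
  obtain ⟨c', rfl⟩ : ∃ c', c = c' + 1 := ⟨c - 1, by omega⟩
  rw [mem_layer_succ] at hx
  exact (hx.1 0 (Nat.zero_le _)) ((mem_layer_zero E v0 x).2 hr)

lemma layer_le {V : Type*} (E : Set (V × V)) (v0 : V) {x : V} {c j : ℕ}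
    (hx : x ∈ layer E v0 c)
    (hcond : if Odd (j + 1) then ∃ w ∈ layer E v0 j, Reach E x w
             else ∃ w ∈ layer E v0 j, Reach E w x) : c ≤ j + 1 := by
  by_contra h
  push_neg at h
  obtain ⟨c', rfl⟩ : ∃ c', c = c' + 1 := ⟨c - 1, by omega⟩
  rw [mem_layer_succ] at hx
  have hmem : x ∈ layer E v0 (j + 1) :=
    (mem_layer_succ E v0 x j).2 ⟨fun j' hj' => hx.1 j' (by omega), hcond⟩
  exact hx.1 (j + 1) (by omega) hmem

theorem stmt_1 {V : Type*} (E : Set (V × V)) (v0 : V)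
    (u v : V) (huv : (u, v) ∈ E)
    (a b : ℕ) (hu : u ∈ layer E v0 a) (hv : v ∈ layer E v0 b) :
    a = b ∨ b = a + 1 ∨ a = b + 1 := by
  have huv' : Reach E u v := Relation.ReflTransGen.single huv
  have hab : a ≤ b + 1 := by
    rcases Nat.even_or_odd b with hb | hb
    · apply layer_le E v0 hu (j := b)
      rw [if_pos (Even.add_one hb)]
      exact ⟨v, hv, huv'⟩
    · have hb0 : b ≠ 0 := by rintro rfl; simp at hb
      obtain ⟨b', rfl⟩ : ∃ b', b = b' + 1 := ⟨b - 1, by omega⟩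
      have hcond := ((mem_layer_succ E v0 v b').1 hv).2
      rw [if_pos hb] at hcond
      obtain ⟨w, hw, hvw⟩ := hcond
      have := layer_le E v0 hu (j := b')
        (by rw [if_pos hb]; exact ⟨w, hw, huv'.trans hvw⟩)
      omega
  have hba : b ≤ a + 1 := by
    rcases Nat.even_or_odd a with ha | ha
    · by_cases ha0 : a = 0
      · subst ha0
        have hr : Reach E v0 v :=
          Relation.ReflTransGen.trans ((mem_layer_zero E v0 u).1 hu) huv'
        have : v ∈ layer E v0 0 := (mem_layer_zero E v0 v).2 hr
        have := layer_zero_eq E v0 hv hr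
        omega
      · obtain ⟨a', rfl⟩ : ∃ a', a = a' + 1 := ⟨a - 1, by omega⟩
        have hcond := ((mem_layer_succ E v0 u a').1 hu).2
        rw [if_neg (by simpa using ha)] at hcond
        obtain ⟨w, hw, hwu⟩ := hcond
        have := layer_le E v0 hv (j := a')
          (by rw [if_neg (by simpa using ha)]; exact ⟨w, hw, hwu.trans huv'⟩)
        omega
    · have := layer_le E v0 hv (j := a)
        (by rw [if_neg (by simp [Nat.odd_add_one, ha])]; exact ⟨u, hu, huv'⟩)
      omega
  omega
end

section
/- In the reachability layering of a digraph, for every even j ≥ 0, every vertex of G* reachable (by a directed path) from a vertex of L_j lies in ∪_{j'≤j} L_{j'}; and for every odd j ≥ 1, every vertex of G* that can reach (by a directed path) a vertex of L_j lies in ∪_{j'≤j} L_{j'}. (Here vertices not lying in any layer ∪_{j'} L_{j'} are excluded, e.g., all vertices lie in some layer when G* is weakly connected.) -/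
theorem stmt_2 {V : Type*} (E : Set (V × V)) (v0 : V) (j : ℕ) :
    (Even j → ∀ w v : V, w ∈ layer E v0 j → Reach E w v →
      (∃ m, v ∈ layer E v0 m) → ∃ j' ≤ j, v ∈ layer E v0 j') ∧
    (Odd j → ∀ w v : V, v ∈ layer E v0 j → Reach E w v →
      (∃ m, w ∈ layer E v0 m) → ∃ j' ≤ j, w ∈ layer E v0 j') := by
  constructor
  · intro hje w v hw hr hm
    obtain ⟨m, hm⟩ := hm
    by_cases hmj : m ≤ j
    · exact ⟨m, hmj, hm⟩
    · exfalso
      push_neg at hmj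
      obtain ⟨m', rfl⟩ : ∃ m', m = m' + 1 := ⟨m - 1, by omega⟩
      simp only [layer, Set.mem_setOf_eq] at hm
      have hvj : v ∈ layer E v0 j := by
        match j, hje with
        | 0, _ =>
          simp only [layer, Set.mem_setOf_eq, Reach] at hw ⊢
          exact hw.trans hr
        | (k+1), hje =>
          have hodd : ¬ Odd (k+1) := Nat.not_odd_iff_even.mpr hje
          simp only [layer, Set.mem_setOf_eq, if_neg hodd] at hw ⊢
          obtain ⟨hw1, u, hu, hru⟩ := hw
          exact ⟨fun j' hj' => hm.1 j' (by omega),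
            u, hu, Relation.ReflTransGen.trans hru hr⟩
      exact hm.1 j (by omega) hvj
  · intro hjo w v hv hr hm
    obtain ⟨m, hm⟩ := hm
    by_cases hmj : m ≤ j
    · exact ⟨m, hmj, hm⟩
    · exfalso
      push_neg at hmj
      obtain ⟨m', rfl⟩ : ∃ m', m = m' + 1 := ⟨m - 1, by omega⟩
      simp only [layer, Set.mem_setOf_eq] at hm
      have hj1 : 1 ≤ j := hjo.pos
      obtain ⟨k, rfl⟩ : ∃ k, j = k + 1 := ⟨j - 1, by omega⟩
      have hwj : w ∈ layer E v0 (k+1) := by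
        simp only [layer, Set.mem_setOf_eq, if_pos hjo] at hv ⊢
        obtain ⟨hv1, u, hu, hvu⟩ := hv
        exact ⟨fun j' hj' => hm.1 j' (by omega),
          u, hu, Relation.ReflTransGen.trans hr hvu⟩
      exact hm.1 (k+1) (by omega) hwj
end

section
/- Consider the dyadic grouping of intervals I_i = [a_i, b_i] ⊆ {0,…,N} with N ≥ 1. For a nonempty group D_j^ℓ define its span S_j^ℓ = [min_{i∈D_j^ℓ} a_i, max_{i∈D_j^ℓ} b_i] (for level 0, S_0^v = {v}). Then every point u ∈ {0,…,N} lies in the spans of at most 5·log₂ N + 6 groups in total: it lies in at most one span S_0^v at level 0, and for each fixed j ∈ {1,…,⌊log₂ N⌋ + 1} it lies in S_j^ℓ for at most 5 multiples ℓ of 2^{j−1}. -/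
/-!
**Statement 6.** Consider the dyadic grouping of intervals `I_i = [a_i, b_i] ⊆ {0,…,N}`
(`N ≥ 1`): `D_0^v = {i : a_i = b_i = v}` and, for `j ≥ 1` and `ℓ` a multiple of
`2^{j−1}`, `D_j^ℓ = {i : 2^{j−1} ≤ b_i − a_i < 2^j, a_i ≤ ℓ ≤ b_i}`.  For a nonempty
group its span is `S_j^ℓ = [min_{i} a_i, max_{i} b_i]` (so `S_0^v = {v}`).  Then
every point `u ∈ {0,…,N}` lies in at most one level-`0` span, for each fixed
`j ∈ {1,…,⌊log₂ N⌋+1}` in at most `5` spans `S_j^ℓ` (`ℓ` a multiple of `2^{j−1}`),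
and in at most `5·log₂ N + 6` spans in total.

(Membership of `u` in the span of a nonempty group is expressed as
`(∃ i in the group, a i ≤ u) ∧ (∃ i in the group, u ≤ b i)`, which is equivalent to
`min a_i ≤ u ≤ max b_i`.)
-/

theorem stmt_6 {ι : Type*} [DecidableEq ι] (D : Finset ι) (a b : ι → ℕ)
    (N : ℕ) (hN : 1 ≤ N)
    (hab : ∀ i ∈ D, a i ≤ b i) (hbN : ∀ i ∈ D, b i ≤ N)
    (u : ℕ) (hu : u ≤ N) :
    let grp : ℕ → ℕ → Finset ι := fun j ℓ =>
      D.filter (fun i => 2 ^ (j - 1) ≤ b i - a i ∧ b i - a i < 2 ^ j ∧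
        a i ≤ ℓ ∧ ℓ ≤ b i)
    let grp0 : ℕ → Finset ι := fun v => D.filter (fun i => a i = b i ∧ a i = v)
    -- number of level-0 groups whose span `{v}` contains `u`
    let cnt0 : ℕ :=
      ((Finset.range (N + 1)).filter (fun v => (grp0 v).Nonempty ∧ u = v)).card
    -- number of level-`j` groups (at multiples `ℓ` of `2^{j-1}`) whose span contains `u`
    let cnt : ℕ → ℕ := fun j =>
      ((Finset.range (N + 1)).filter (fun ℓ => 2 ^ (j - 1) ∣ ℓ ∧
        (grp j ℓ).Nonempty ∧ (∃ i ∈ grp j ℓ, a i ≤ u) ∧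
        (∃ i ∈ grp j ℓ, u ≤ b i))).card
    cnt0 ≤ 1 ∧
    (∀ j ∈ Finset.Icc 1 (Nat.log 2 N + 1), cnt j ≤ 5) ∧
    ((cnt0 : ℝ) + ∑ j ∈ Finset.Icc 1 (Nat.log 2 N + 1), (cnt j : ℝ)) ≤
      5 * Real.logb 2 (N : ℝ) + 6 := by
  intro grp grp0 cnt0 cnt
  have h0 : cnt0 ≤ 1 := by
    have hsub : (Finset.range (N + 1)).filter (fun v => (grp0 v).Nonempty ∧ u = v)
        ⊆ {u} := by
      intro v hv
      simp only [Finset.mem_filter] at hv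
      simp [hv.2.2.symm]
    calc cnt0 ≤ ({u} : Finset ℕ).card := Finset.card_le_card hsub
    _ = 1 := rfl
  have hj : ∀ j ∈ Finset.Icc 1 (Nat.log 2 N + 1), cnt j ≤ 5 := by
    intro j hjmem
    have hj1 : 1 ≤ j := (Finset.mem_Icc.mp hjmem).1
    set m := 2 ^ (j - 1) with hm
    have hm0 : 0 < m := Nat.pow_pos (by norm_num)
    have hmm : 2 ^ j = 2 * m := by
      rw [hm, ← pow_succ']
      congr 1
      omega
    have hcard : cnt j ≤ (Finset.Icc (u / m - 1) (u / m + 2)).card := by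
      apply Finset.card_le_card_of_injOn (fun ℓ => ℓ / m)
      · intro ℓ hℓ
        simp only [Finset.mem_coe, Finset.mem_filter, Finset.mem_range] at hℓ
        obtain ⟨hr, hdvd, hne, ⟨i, hi, hiu⟩, ⟨i', hi', hui'⟩⟩ := hℓ
        simp only [grp, Finset.mem_filter] at hi hi'
        obtain ⟨hiD, h1, h2, h3, h4⟩ := hi
        obtain ⟨hiD', h1', h2', h3', h4'⟩ := hi'
        have habi := hab i hiD
        have habi' := hab i' hiD'
        obtain ⟨k, hk⟩ := hdvd
        rw [← hm] at hk
        have hℓdiv : ℓ / m = k := by rw [hk, Nat.mul_div_cancel_left _ hm0]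
        rw [hmm] at h2 h2'
        -- ℓ < u + 2m and u < ℓ + 2m
        have hub : ℓ < u + 2 * m := by omega
        have hlb : u < ℓ + 2 * m := by omega
        have hk2 : (k + 2) * m = ℓ + 2 * m := by rw [hk]; ring
        have hdivlt : u / m < k + 2 := by
          rw [Nat.div_lt_iff_lt_mul hm0]
          omega
        have humod : u < (u / m + 1) * m :=
          (Nat.div_lt_iff_lt_mul hm0).mp (Nat.lt_succ_self _)
        have hkm : k * m < (u / m + 3) * m := by
          have h5 : (u / m + 3) * m = (u / m + 1) * m + 2 * m := by ring
          have h6 : k * m = ℓ := by rw [hk]; ring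
          omega
        have hklt : k < u / m + 3 := Nat.lt_of_mul_lt_mul_right hkm
        simp only [Finset.mem_coe, Finset.mem_Icc, hℓdiv]
        omega
      · intro x hx y hy hxy
        simp only [Finset.coe_filter, Set.mem_setOf_eq] at hx hy
        have hxd := Nat.div_mul_cancel hx.2.1
        have hyd := Nat.div_mul_cancel hy.2.1
        simp only at hxy
        rw [← hxd, ← hyd, hxy]
    have : (Finset.Icc (u / m - 1) (u / m + 2)).card ≤ 5 := by
      rw [Nat.card_Icc]
      omega
    omega
  refine ⟨h0, hj, ?_⟩
  have hsumN : ∑ j ∈ Finset.Icc 1 (Nat.log 2 N + 1), cnt j ≤ (Nat.log 2 N + 1) * 5 := by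
    have := Finset.sum_le_card_nsmul (Finset.Icc 1 (Nat.log 2 N + 1)) cnt 5 hj
    simpa [Nat.card_Icc, Nat.smul_one_eq_cast] using this
  have hlog : (Nat.log 2 N : ℝ) ≤ Real.logb 2 N := Real.natLog_le_logb N 2
  have h0' : (cnt0 : ℝ) ≤ 1 := by exact_mod_cast h0
  have hsumR : ∑ j ∈ Finset.Icc 1 (Nat.log 2 N + 1), (cnt j : ℝ)
      ≤ ((Nat.log 2 N : ℝ) + 1) * 5 := by
    rw [← Nat.cast_sum]
    exact_mod_cast hsumN
  linarith
end

section
/- Let G be a digraph containing a directed path P, and for a vertex s that can reach V(P), let a(s) denote the earliest vertex of P (with respect to the order ≤_P along P) reachable from s by a directed path in G. If P' is a directed path in G from s to a(s), P'' is a directed path in G from s' to a(s'), and V(P') ∩ V(P'') ≠ ∅, then a(s) = a(s'). Symmetrically, for a vertex t reachable from V(P), let b(t) denote the latest vertex of P that can reach t in G; if Q' is a directed path from b(t) to t, Q'' is a directed path from b(t') to t', and V(Q') ∩ V(Q'') ≠ ∅, then b(t) = b(t'). -/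
/-- `l` is (the vertex list of) a directed path from `u` to `w` using edges of `E`. -/
def IsDipath {V : Type*} (E : Set (V × V)) (l : List V) (u w : V) : Prop :=
  l ≠ [] ∧ l.Chain' (fun a b => (a, b) ∈ E) ∧
    l.head? = some u ∧ l.getLast? = some w


lemma dipath_reach {V : Type*} (E : Set (V × V)) :
    ∀ (l : List V) (u w : V), IsDipath E l u w → ∀ x ∈ l, Reach E u x ∧ Reach E x w := by
  intro l
  induction l with
  | nil => intro u w h; exact absurd rfl h.1
  | cons a l ih =>
    intro u w h x hx
    obtain ⟨-, hc, hh, hl⟩ := h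
    have hau : a = u := by simpa using hh
    subst hau
    cases l with
    | nil =>
      have hxw : x = a := by simpa using hx
      have haw : a = w := by simpa using hl
      subst hxw; subst haw
      exact ⟨Relation.ReflTransGen.refl, Relation.ReflTransGen.refl⟩
    | cons b l' =>
      have hab : (a, b) ∈ E := (List.isChain_cons_cons.mp hc).1
      have hd : IsDipath E (b :: l') b w := by
        refine ⟨by simp, (List.isChain_cons_cons.mp hc).2, by simp, ?_⟩
        simpa using hl
      rcases List.mem_cons.mp hx with h1 | h2
      · subst h1
        have hbw := (ih b w hd b (by simp)).2
        exact ⟨Relation.ReflTransGen.refl,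
          Relation.ReflTransGen.head hab hbw⟩
      · obtain ⟨hbx, hxw⟩ := ih b w hd x h2
        exact ⟨Relation.ReflTransGen.head hab hbx, hxw⟩

theorem stmt_7 {V : Type*} (E : Set (V × V)) (n : ℕ) (p : ℕ → V)
    (hpath : ∀ l, l < n → (p l, p (l + 1)) ∈ E) :
    -- first part: earliest reachable vertices coincide
    (∀ (s s' : V) (ia ia' : ℕ) (P' P'' : List V),
      ia ≤ n → ia' ≤ n →
      (∀ l ≤ n, Reach E s (p l) → ia ≤ l) →
      (∀ l ≤ n, Reach E s' (p l) → ia' ≤ l) →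
      IsDipath E P' s (p ia) → IsDipath E P'' s' (p ia') →
      (∃ w, w ∈ P' ∧ w ∈ P'') →
      p ia = p ia') ∧
    -- symmetric part: latest reaching vertices coincide
    (∀ (t t' : V) (ib ib' : ℕ) (Q' Q'' : List V),
      ib ≤ n → ib' ≤ n →
      (∀ l ≤ n, Reach E (p l) t → l ≤ ib) →
      (∀ l ≤ n, Reach E (p l) t' → l ≤ ib') →
      IsDipath E Q' (p ib) t → IsDipath E Q'' (p ib') t' →
      (∃ w, w ∈ Q' ∧ w ∈ Q'') →
      p ib = p ib') := by
  constructor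
  · rintro s s' ia ia' P' P'' hia hia' hmin hmin' hP' hP'' ⟨w, hw1, hw2⟩
    obtain ⟨hsw, hwa⟩ := dipath_reach E P' s (p ia) hP' w hw1
    obtain ⟨hs'w, hwa'⟩ := dipath_reach E P'' s' (p ia') hP'' w hw2
    have h1 : ia ≤ ia' := hmin ia' hia' (hsw.trans hwa')
    have h2 : ia' ≤ ia := hmin' ia hia (hs'w.trans hwa)
    rw [le_antisymm h1 h2]
  · rintro t t' ib ib' Q' Q'' hib hib' hmax hmax' hQ' hQ'' ⟨w, hw1, hw2⟩
    obtain ⟨hbw, hwt⟩ := dipath_reach E Q' (p ib) t hQ' w hw1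
    obtain ⟨hb'w, hwt'⟩ := dipath_reach E Q'' (p ib') t' hQ'' w hw2
    have h1 : ib ≤ ib' := hmax' ib hib (hbw.trans hwt')
    have h2 : ib' ≤ ib := hmax ib' hib' (hb'w.trans hwt)
    rw [le_antisymm h2 h1]
end

section
/- Let G = (V, E) be a digraph with nonnegative edge costs c, let D = {(s_i, t_i)}_{i∈[k]} be terminal pairs, and let OPT denote the minimum cost of a feasible solution for (G, D). Suppose ρ ≥ 0 is such that for every nonempty subset D' ⊆ D there exists a junction tree H in G covering a nonempty subset D_H ⊆ D' with density c(H)/|D_H| ≤ ρ·OPT/|D'|. Then there exists a feasible solution for (G, D) of cost at most ρ·H_k·OPT, where H_k = Σ_{m=1}^k 1/m is the k-th harmonic number. -/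
/-!
**Statement 14.** Let `G = (V, E)` be a digraph with nonnegative edge costs `c`,
let `D = {(sᵢ, tᵢ)}_{i ∈ [k]}` be terminal pairs, and let `OPT` be the minimum
cost of a feasible solution for `(G, D)`.  Suppose `ρ ≥ 0` is such that for every
nonempty subset `D' ⊆ D` there exists a junction tree `H` in `G` covering a
nonempty subset `D_H ⊆ D'` with density `c(H)/|D_H| ≤ ρ·OPT/|D'|`.  Then there
exists a feasible solution for `(G, D)` of cost at most `ρ·H_k·OPT`, where
`H_k = Σ_{m=1}^k 1/m` is the `k`-th harmonic number.
-/

private lemma harm_step (d n : ℕ) (hd : 1 ≤ d) (hdn : d ≤ n) :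
    (d : ℝ) / (n : ℝ) + ∑ m ∈ Finset.Icc 1 (n - d), (1 : ℝ) / (m : ℝ)
      ≤ ∑ m ∈ Finset.Icc 1 n, (1 : ℝ) / (m : ℝ) := by
  have hn : 0 < n := lt_of_lt_of_le hd hdn
  have h1 : Finset.Icc 1 (n - d) = Finset.Ioc 0 (n - d) := by
    rw [← Finset.Icc_add_one_left_eq_Ioc]; rfl
  have h2 : Finset.Icc 1 n = Finset.Ioc 0 n := by rw [← Finset.Icc_add_one_left_eq_Ioc]; rfl
  rw [h1, h2, ← Finset.sum_Ioc_consecutive (fun m => (1 : ℝ) / (m : ℝ))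
    (Nat.zero_le (n - d)) (Nat.sub_le n d)]
  have hmain : (d : ℝ) / (n : ℝ) ≤ ∑ m ∈ Finset.Ioc (n - d) n, (1 : ℝ) / (m : ℝ) := by
    have hcard : (Finset.Ioc (n - d) n).card = d := by
      rw [Nat.card_Ioc]; omega
    have hb : ∀ m ∈ Finset.Ioc (n - d) n, (1 : ℝ) / (n : ℝ) ≤ 1 / (m : ℝ) := by
      intro m hm
      rw [Finset.mem_Ioc] at hm
      have hm0 : 0 < (m : ℝ) := by exact_mod_cast show 0 < m by omega
      exact one_div_le_one_div_of_le hm0 (by exact_mod_cast hm.2)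
    calc (d : ℝ) / (n : ℝ) = (Finset.Ioc (n - d) n).card • ((1 : ℝ) / (n : ℝ)) := by
          rw [hcard]; simp [div_eq_mul_inv, mul_comm]
      _ ≤ ∑ m ∈ Finset.Ioc (n - d) n, (1 : ℝ) / (m : ℝ) := Finset.card_nsmul_le_sum _ _ _ hb
  linarith

private lemma aux_cover {V : Type*} [Fintype V] [DecidableEq V]
    (E : Finset (V × V)) (c : V × V → ℝ) (hc : ∀ e, 0 ≤ c e)
    (k : ℕ) (s t : Fin k → V) (OPT ρ : ℝ) (hρ : 0 ≤ ρ) (hOPT0 : 0 ≤ OPT)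
    (hjunction : ∀ D' : Finset (Fin k), D'.Nonempty →
      ∃ (H : Finset (V × V)) (r : V) (DH : Finset (Fin k)),
        H ⊆ E ∧ DH ⊆ D' ∧ DH.Nonempty ∧
        (∀ i ∈ DH,
          Relation.ReflTransGen (fun a b => (a, b) ∈ H) (s i) r ∧
          Relation.ReflTransGen (fun a b => (a, b) ∈ H) r (t i)) ∧
        (∑ e ∈ H, c e) / (DH.card : ℝ) ≤ ρ * OPT / (D'.card : ℝ)) :
    ∀ n (D' : Finset (Fin k)), D'.card = n →
      ∃ F ⊆ E,
        (∀ i ∈ D', Relation.ReflTransGen (fun a b => (a, b) ∈ F) (s i) (t i)) ∧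
        ∑ e ∈ F, c e ≤ ρ * (∑ m ∈ Finset.Icc 1 n, (1 : ℝ) / (m : ℝ)) * OPT := by
  intro n
  induction n using Nat.strong_induction_on with
  | _ n ih =>
    intro D' hcard
    rcases D'.eq_empty_or_nonempty with rfl | hne
    · refine ⟨∅, Finset.empty_subset _, by simp, ?_⟩
      simp only [Finset.sum_empty]
      have hH : 0 ≤ ∑ m ∈ Finset.Icc 1 n, (1 : ℝ) / (m : ℝ) :=
        Finset.sum_nonneg fun m _ => by positivity
      positivity
    · obtain ⟨H, r, DH, hHE, hDHsub, hDHne, hpaths, hdens⟩ := hjunction D' hne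
      have hd1 : 1 ≤ DH.card := hDHne.card_pos
      have hdn : DH.card ≤ n := hcard ▸ Finset.card_le_card hDHsub
      have hn0 : 0 < n := lt_of_lt_of_le hd1 hdn
      obtain ⟨F', hF'E, hF'path, hF'cost⟩ := ih (n - DH.card) (by omega) (D' \ DH)
        (by rw [Finset.card_sdiff_of_subset hDHsub, hcard])
      refine ⟨H ∪ F', Finset.union_subset hHE hF'E, ?_, ?_⟩
      · intro i hi
        by_cases hiDH : i ∈ DH
        · obtain ⟨h1, h2⟩ := hpaths i hiDH
          exact (Relation.ReflTransGen.mono (fun a b hab => Finset.mem_union_left _ hab) _ _ h1).trans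
            (Relation.ReflTransGen.mono (fun a b hab => Finset.mem_union_left _ hab) _ _ h2)
        · exact Relation.ReflTransGen.mono (fun a b hab => Finset.mem_union_right _ hab) _ _
            (hF'path i (Finset.mem_sdiff.mpr ⟨hi, hiDH⟩))
      · have hsum : ∑ e ∈ H ∪ F', c e ≤ ∑ e ∈ H, c e + ∑ e ∈ F', c e := by
          have h1 := Finset.sum_union_inter (s₁ := H) (s₂ := F') (f := c)
          have h0 : 0 ≤ ∑ e ∈ H ∩ F', c e := Finset.sum_nonneg fun e _ => hc e
          linarith
        have hDHpos : (0 : ℝ) < (DH.card : ℝ) := by exact_mod_cast hd1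
        have hnpos : (0 : ℝ) < (n : ℝ) := by exact_mod_cast hn0
        have hHcost : ∑ e ∈ H, c e ≤ ρ * OPT * (DH.card : ℝ) / (n : ℝ) := by
          rw [hcard] at hdens
          rw [div_le_div_iff₀ hDHpos hnpos] at hdens
          rw [div_eq_mul_inv]
          calc ∑ e ∈ H, c e = (∑ e ∈ H, c e) * (n : ℝ) * (n : ℝ)⁻¹ := by
                field_simp
            _ ≤ ρ * OPT * (DH.card : ℝ) * (n : ℝ)⁻¹ := by
                apply mul_le_mul_of_nonneg_right hdens (by positivity)
        have key := harm_step DH.card n hd1 hdn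
        have hmul : ρ * OPT * ((DH.card : ℝ) / (n : ℝ)
              + ∑ m ∈ Finset.Icc 1 (n - DH.card), (1 : ℝ) / (m : ℝ))
            ≤ ρ * OPT * ∑ m ∈ Finset.Icc 1 n, (1 : ℝ) / (m : ℝ) :=
          mul_le_mul_of_nonneg_left key (mul_nonneg hρ hOPT0)
        have e1 : ρ * OPT * ((DH.card : ℝ) / (n : ℝ)
              + ∑ m ∈ Finset.Icc 1 (n - DH.card), (1 : ℝ) / (m : ℝ))
            = ρ * OPT * (DH.card : ℝ) / (n : ℝ)
              + ρ * (∑ m ∈ Finset.Icc 1 (n - DH.card), (1 : ℝ) / (m : ℝ)) * OPT := by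
          ring
        have e2 : ρ * OPT * ∑ m ∈ Finset.Icc 1 n, (1 : ℝ) / (m : ℝ)
            = ρ * (∑ m ∈ Finset.Icc 1 n, (1 : ℝ) / (m : ℝ)) * OPT := by ring
        linarith

theorem stmt_14 {V : Type*} [Fintype V] [DecidableEq V]
    (E : Finset (V × V)) (c : V × V → ℝ) (hc : ∀ e, 0 ≤ c e)
    (k : ℕ) (s t : Fin k → V) (OPT ρ : ℝ) (hρ : 0 ≤ ρ)
    -- `OPT` is the minimum cost of a feasible solution
    (hOPT : IsLeast {x : ℝ | ∃ F ⊆ E,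
      (∀ i : Fin k, Relation.ReflTransGen (fun a b => (a, b) ∈ F) (s i) (t i)) ∧
      x = ∑ e ∈ F, c e} OPT)
    -- every nonempty `D' ⊆ D` admits a junction tree of density `≤ ρ·OPT/|D'|`
    (hjunction : ∀ D' : Finset (Fin k), D'.Nonempty →
      ∃ (H : Finset (V × V)) (r : V) (DH : Finset (Fin k)),
        H ⊆ E ∧ DH ⊆ D' ∧ DH.Nonempty ∧
        (∀ i ∈ DH,
          Relation.ReflTransGen (fun a b => (a, b) ∈ H) (s i) r ∧
          Relation.ReflTransGen (fun a b => (a, b) ∈ H) r (t i)) ∧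
        (∑ e ∈ H, c e) / (DH.card : ℝ) ≤ ρ * OPT / (D'.card : ℝ)) :
    ∃ F ⊆ E,
      (∀ i : Fin k, Relation.ReflTransGen (fun a b => (a, b) ∈ F) (s i) (t i)) ∧
      ∑ e ∈ F, c e ≤ ρ * (∑ m ∈ Finset.Icc 1 k, (1 : ℝ) / (m : ℝ)) * OPT := by
  have hOPT0 : 0 ≤ OPT := by
    obtain ⟨F0, _, _, hx⟩ := hOPT.1
    rw [hx]
    exact Finset.sum_nonneg fun e _ => hc e
  obtain ⟨F, hFE, hFpath, hFcost⟩ := aux_cover E c hc k s t OPT ρ hρ hOPT0 hjunction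
    k Finset.univ (by simp)
  exact ⟨F, hFE, fun i => hFpath i (Finset.mem_univ i), hFcost⟩
end
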